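/- Under the same magic-square hypotheses (nine correlation conditions each within ε of their perfect values, with the stated commutation relations among self-adjoint unitaries), one has ‖Z₁X₂ψ − X₂Z₁ψ‖ ≤ 4√(2ε). -/
import Mathlib


open scoped InnerProductSpace


lemma isomAux {H : Type*} [NormedAddCommGroup H] [InnerProductSpace ℂ H] [CompleteSpace H]
    (A : H →L[ℂ] H) (ha : ContinuousLinearMap.adjoint A = A) (hu : A * A = 1) (x : H) :
    ‖A x‖ = ‖x‖ := by
  have h : ⟪A x, A x⟫_ℂ = ⟪x, x⟫_ℂ := by
    rw [← ContinuousLinearMap.adjoint_inner_left, ha, ← ContinuousLinearMap.mul_apply, hu,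
      ContinuousLinearMap.one_apply]
  have h2 : ‖A x‖ ^ 2 = ‖x‖ ^ 2 := by
    rw [← @inner_self_eq_norm_sq ℂ, ← @inner_self_eq_norm_sq ℂ, h]
  nlinarith [norm_nonneg (A x), norm_nonneg x]

lemma keyAux {H : Type*} [NormedAddCommGroup H] [InnerProductSpace ℂ H] [CompleteSpace H]
    (A B : H →L[ℂ] H) (ha : ContinuousLinearMap.adjoint A = A) (hua : A * A = 1)
    (hb : ContinuousLinearMap.adjoint B = B) (hub : B * B = 1)
    (ψ : H) (hψ : ‖ψ‖ = 1) (ε : ℝ) (hε : 0 ≤ ε)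
    (h : (⟪ψ, (A * B) ψ⟫_ℂ).re ≥ 1 - ε) : ‖A ψ - B ψ‖ ≤ Real.sqrt (2 * ε) := by
  have hnA : ‖A ψ‖ = 1 := by rw [isomAux A ha hua, hψ]
  have hnB : ‖B ψ‖ = 1 := by rw [isomAux B hb hub, hψ]
  have hre : (⟪A ψ, B ψ⟫_ℂ).re ≥ 1 - ε := by
    rwa [← ha, ContinuousLinearMap.adjoint_inner_left, ← ContinuousLinearMap.mul_apply]
  have hsq : ‖A ψ - B ψ‖ ^ 2 ≤ 2 * ε := by
    rw [@norm_sub_sq ℂ, hnA, hnB]; simp only [RCLike.re_to_complex]; nlinarith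
  calc ‖A ψ - B ψ‖ = Real.sqrt (‖A ψ - B ψ‖ ^ 2) := by
        rw [Real.sqrt_sq (norm_nonneg _)]
    _ ≤ Real.sqrt (2 * ε) := Real.sqrt_le_sqrt hsq

/-- Robust magic-square relation: under the nine near-perfect magic-square
correlation conditions (each within ε of its ideal value 1) for self-adjoint
unitaries with the stated commutation relations (Alice-side operators, indices
1,2, commute with Bob-side operators, indices 3,4; this models the tensor
product structure), the bound ‖Z₁X₂ψ − X₂Z₁ψ‖ ≤ 4√(2ε) holds. -/
theorem stmt11 {H : Type*} [NormedAddCommGroup H] [InnerProductSpace ℂ H] [CompleteSpace H]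
    (X₁ X₂ Z₁ Z₂ W₁ W₂ X₃ X₄ Z₃ Z₄ W₃ W₄ : H →L[ℂ] H)
    (hsa : ∀ P ∈ ([X₁, X₂, Z₁, Z₂, W₁, W₂, X₃, X₄, Z₃, Z₄, W₃, W₄] : List (H →L[ℂ] H)),
      ContinuousLinearMap.adjoint P = P ∧ P * P = 1)
    (hAB : ∀ P ∈ ([X₁, X₂, Z₁, Z₂, W₁, W₂] : List (H →L[ℂ] H)),
      ∀ Q ∈ ([X₃, X₄, Z₃, Z₄, W₃, W₄] : List (H →L[ℂ] H)), Commute P Q)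
    (hXX : Commute X₁ X₂) (hZZ : Commute Z₁ Z₂) (hWW : Commute W₁ W₂)
    (hZX : Commute Z₃ X₄) (hXZ : Commute X₃ Z₄) (hWW' : Commute W₃ W₄)
    (ψ : H) (hψ : ‖ψ‖ = 1) (ε : ℝ) (hε : 0 ≤ ε)
    (h1 : (⟪ψ, (Z₁ * X₃) ψ⟫_ℂ).re ≥ 1 - ε)
    (h2 : (⟪ψ, (Z₂ * X₄) ψ⟫_ℂ).re ≥ 1 - ε)
    (h3 : (⟪ψ, (X₁ * Z₃) ψ⟫_ℂ).re ≥ 1 - ε)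
    (h4 : (⟪ψ, (X₂ * Z₄) ψ⟫_ℂ).re ≥ 1 - ε)
    (h5 : (⟪ψ, (Z₁ * Z₂ * W₃) ψ⟫_ℂ).re ≥ 1 - ε)
    (h6 : (⟪ψ, (X₁ * X₂ * W₄) ψ⟫_ℂ).re ≥ 1 - ε)
    (h7 : (⟪ψ, (W₁ * X₃ * Z₄) ψ⟫_ℂ).re ≥ 1 - ε)
    (h8 : (⟪ψ, (W₂ * X₄ * Z₃) ψ⟫_ℂ).re ≥ 1 - ε)
    (h9 : -(⟪ψ, (W₁ * W₂ * W₃ * W₄) ψ⟫_ℂ).re ≥ 1 - ε) :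
    ‖Z₁ (X₂ ψ) - X₂ (Z₁ ψ)‖ ≤ 4 * Real.sqrt (2 * ε) := by
  obtain ⟨haX₂, huX₂⟩ := hsa X₂ (by simp)
  obtain ⟨haZ₁, huZ₁⟩ := hsa Z₁ (by simp)
  obtain ⟨haX₃, huX₃⟩ := hsa X₃ (by simp)
  obtain ⟨haZ₄, huZ₄⟩ := hsa Z₄ (by simp)
  set δ := Real.sqrt (2 * ε) with hδ
  have s1 : ‖X₂ ψ - Z₄ ψ‖ ≤ δ := keyAux X₂ Z₄ haX₂ huX₂ haZ₄ huZ₄ ψ hψ ε hε h4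
  have s2 : ‖Z₁ ψ - X₃ ψ‖ ≤ δ := keyAux Z₁ X₃ haZ₁ huZ₁ haX₃ huX₃ ψ hψ ε hε h1
  have t1 : ‖Z₁ (X₂ ψ) - Z₁ (Z₄ ψ)‖ ≤ δ := by
    rw [← map_sub, isomAux Z₁ haZ₁ huZ₁]; exact s1
  have t2 : ‖Z₄ (Z₁ ψ) - Z₄ (X₃ ψ)‖ ≤ δ := by
    rw [← map_sub, isomAux Z₄ haZ₄ huZ₄]; exact s2
  have t3 : ‖X₃ (Z₄ ψ) - X₃ (X₂ ψ)‖ ≤ δ := by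
    rw [← map_sub, isomAux X₃ haX₃ huX₃, norm_sub_rev]; exact s1
  have t4 : ‖X₂ (X₃ ψ) - X₂ (Z₁ ψ)‖ ≤ δ := by
    rw [← map_sub, isomAux X₂ haX₂ huX₂, norm_sub_rev]; exact s2
  have c1 : Z₁ (Z₄ ψ) = Z₄ (Z₁ ψ) := by
    have := congrFun (congrArg DFunLike.coe (hAB Z₁ (by simp) Z₄ (by simp)).eq) ψ
    simpa using this
  have c2 : X₃ (Z₄ ψ) = Z₄ (X₃ ψ) := by
    have := congrFun (congrArg DFunLike.coe hXZ.eq) ψ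
    simpa using this
  have c3 : X₂ (X₃ ψ) = X₃ (X₂ ψ) := by
    have := congrFun (congrArg DFunLike.coe (hAB X₂ (by simp) X₃ (by simp)).eq) ψ
    simpa using this
  have hsplit : Z₁ (X₂ ψ) - X₂ (Z₁ ψ) =
      (Z₁ (X₂ ψ) - Z₁ (Z₄ ψ)) + (Z₄ (Z₁ ψ) - Z₄ (X₃ ψ)) +
      (X₃ (Z₄ ψ) - X₃ (X₂ ψ)) + (X₂ (X₃ ψ) - X₂ (Z₁ ψ)) := by
    rw [c1, c2, c3]; abel
  rw [hsplit]
  have b1 := norm_add_le ((Z₁ (X₂ ψ) - Z₁ (Z₄ ψ)) + (Z₄ (Z₁ ψ) - Z₄ (X₃ ψ)) +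
      (X₃ (Z₄ ψ) - X₃ (X₂ ψ))) (X₂ (X₃ ψ) - X₂ (Z₁ ψ))
  have b2 := norm_add_le ((Z₁ (X₂ ψ) - Z₁ (Z₄ ψ)) + (Z₄ (Z₁ ψ) - Z₄ (X₃ ψ)))
      (X₃ (Z₄ ψ) - X₃ (X₂ ψ))
  have b3 := norm_add_le (Z₁ (X₂ ψ) - Z₁ (Z₄ ψ)) (Z₄ (Z₁ ψ) - Z₄ (X₃ ψ))
  linarith
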